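/- Let $R$ be a commutative ring, $G$, $H$, $K$ finite groups, $X \leq H \times G$, $Y \leq K \times H$, $M$ an $RX$-module, and $N$ an $RY$-module. Then there is an isomorphism of $(RK,RG)$-bimodules $$(\mathrm{Ind}_Y^{K\times H} N) \otimes_{RH} (\mathrm{Ind}_X^{H\times G} M) \cong \bigoplus_{t \in [p_2(Y)\backslash H / p_1(X)]} \mathrm{Ind}_{Y * {}^{(t,1)}X}^{K \times G} \big(N \otimes_{R(k_2(Y) \cap {}^t k_1(X))} {}^{(t,1)}M\big),$$ where the action of $(k,g) \in Y * {}^{(t,1)}X$ on $N \otimes M$ is $k\cdot(n \otimes m)\cdot g^{-1} = (k n h^{-1}) \otimes (h^t m g^{-1})$ for any $h \in H$ with $(k,h) \in Y$ and $(h^t, g) \in X$. -/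

import Mathlib

open TensorProduct MulOpposite DirectSum

universe u

attribute [local instance] Classical.propDecidable

open TensorProduct

/-- The relations defining the induced module `R Γ ⊗_{R X} M`: the submodule of
`R Γ ⊗_R M` spanned by the elements `(a x) ⊗ m - a ⊗ (x • m)` for `x ∈ X`. -/
noncomputable def indRel (R Γ : Type*) [CommRing R] [Group Γ] (X : Subgroup Γ)
    (M : Type*) [AddCommGroup M] [Module R M] (ρ : X →* Module.End R M) :
    Submodule R ((MonoidAlgebra R Γ) ⊗[R] M) :=
  Submodule.span R {z | ∃ (γ : Γ) (x : X) (m : M),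
    z = MonoidAlgebra.single (γ * (x : Γ)) (1 : R) ⊗ₜ[R] m -
        MonoidAlgebra.single γ (1 : R) ⊗ₜ[R] (ρ x m)}

/-- The induced module `Ind_X^Γ M = R Γ ⊗_{R X} M`, realized as the quotient of
`R Γ ⊗_R M` by the induction relations. -/
def Ind (R Γ : Type*) [CommRing R] [Group Γ] (X : Subgroup Γ)
    (M : Type*) [AddCommGroup M] [Module R M] (ρ : X →* Module.End R M) :
    Type _ :=
  ((MonoidAlgebra R Γ) ⊗[R] M) ⧸ indRel R Γ X M ρ

noncomputable instance (R Γ : Type*) [CommRing R] [Group Γ] (X : Subgroup Γ)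
    (M : Type*) [AddCommGroup M] [Module R M] (ρ : X →* Module.End R M) :
    AddCommGroup (Ind R Γ X M ρ) :=
  inferInstanceAs (AddCommGroup (((MonoidAlgebra R Γ) ⊗[R] M) ⧸ indRel R Γ X M ρ))

noncomputable instance (R Γ : Type*) [CommRing R] [Group Γ] (X : Subgroup Γ)
    (M : Type*) [AddCommGroup M] [Module R M] (ρ : X →* Module.End R M) :
    Module R (Ind R Γ X M ρ) :=
  inferInstanceAs (Module R (((MonoidAlgebra R Γ) ⊗[R] M) ⧸ indRel R Γ X M ρ))

/-- The canonical generator `(c γ) ⊗ m` of the induced module. -/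
noncomputable def Ind.gen (R Γ : Type*) [CommRing R] [Group Γ] (X : Subgroup Γ)
    (M : Type*) [AddCommGroup M] [Module R M] (ρ : X →* Module.End R M)
    (γ : Γ) (c : R) (m : M) : Ind R Γ X M ρ :=
  Submodule.Quotient.mk (MonoidAlgebra.single γ c ⊗ₜ[R] m)
variable {G H K : Type*} [Group G] [Group H] [Group K]

/-- The star (composition) product `Y * ⁽ᵗ'¹⁾X` of subgroups `Y ≤ K × H`, `X ≤ H × G`. -/
def starSubgroup (X : Subgroup (H × G)) (Y : Subgroup (K × H)) (t : H) :
    Subgroup (K × G) where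
  carrier := {p : K × G | ∃ h : H, (p.1, h) ∈ Y ∧ (t⁻¹ * h * t, p.2) ∈ X}
  one_mem' := ⟨1, by exact Y.one_mem, by simp only [mul_one, inv_mul_cancel]; exact X.one_mem⟩
  mul_mem' := by
    rintro a b ⟨h, hY, hX⟩ ⟨h', hY', hX'⟩
    refine ⟨h * h', ?_, ?_⟩
    · exact Y.mul_mem hY hY'
    · have : ((t⁻¹ * (h * h') * t : H), (a.2 * b.2 : G)) =
        ((t⁻¹ * h * t, a.2) : H × G) * (t⁻¹ * h' * t, b.2) := by
        ext <;> simp <;> group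
      rw [show ((a * b : K × G).2) = a.2 * b.2 from rfl, this]
      exact X.mul_mem hX hX'
  inv_mem' := by
    rintro a ⟨h, hY, hX⟩
    refine ⟨h⁻¹, ?_, ?_⟩
    · have : ((a.1⁻¹ : K), h⁻¹) = ((a.1, h) : K × H)⁻¹ := rfl
      rw [show ((a⁻¹ : K × G).1) = a.1⁻¹ from rfl, this]
      exact Y.inv_mem hY
    · have : ((t⁻¹ * h⁻¹ * t : H), (a.2⁻¹ : G)) = ((t⁻¹ * h * t, a.2) : H × G)⁻¹ := by
        ext <;> simp <;> group
      rw [show ((a⁻¹ : K × G).2) = a.2⁻¹ from rfl, this]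
      exact X.inv_mem hX

variable {R K H G N M : Type u} [CommRing R] [Group K] [Group H] [Group G]
  [AddCommGroup N] [Module R N] [AddCommGroup M] [Module R M]

/-- The relations defining `A ⊗_{RH} B` for an `R(K×H)`-module `A` and an
`R(H×G)`-module `B`: the span of the elements `(a·h) ⊗ b - a ⊗ (h·b)`. -/
def rhRel (A B : Type u) [AddCommGroup A] [Module R A] [AddCommGroup B] [Module R B]
    (ρA : (K × H) →* Module.End R A) (ρB : (H × G) →* Module.End R B) :
    Submodule R (A ⊗[R] B) :=
  Submodule.span R {z | ∃ (h : H) (x : A) (y : B),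
    z = (ρA ((1 : K), h⁻¹) x) ⊗ₜ[R] y - x ⊗ₜ[R] (ρB (h, (1 : G)) y)}

/-- The relations defining `N ⊗_{R(k₂(Y) ∩ ᵗk₁(X))} ⁽ᵗ'¹⁾M` as a quotient of `N ⊗_R M`:
for `h ∈ k₂(Y) ∩ ᵗk₁(X)`, the element `h` acts on `N` on the right via `(1,h) ∈ Y` and on
`M` on the left via `(hᵗ,1) = (t⁻¹ht,1) ∈ X`. -/
def smallRel (X : Subgroup (H × G)) (Y : Subgroup (K × H))
    (ρN : Y →* Module.End R N) (ρM : X →* Module.End R M) (t : H) :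
    Submodule R (N ⊗[R] M) :=
  Submodule.span R {z | ∃ (h : H) (h1 : ((1 : K), h) ∈ Y)
      (h2 : (t⁻¹ * h * t, (1 : G)) ∈ X) (n : N) (m : M),
    z = (ρN ⟨((1 : K), h⁻¹), by simpa using Y.inv_mem h1⟩ n) ⊗ₜ[R] m -
        n ⊗ₜ[R] (ρM ⟨(t⁻¹ * h * t, (1 : G)), h2⟩ m)}

/-- `N ⊗_{R(k₂(Y) ∩ ᵗk₁(X))} ⁽ᵗ'¹⁾M`. -/
def SmallTensor (X : Subgroup (H × G)) (Y : Subgroup (K × H))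
    (ρN : Y →* Module.End R N) (ρM : X →* Module.End R M) (t : H) : Type u :=
  (N ⊗[R] M) ⧸ smallRel X Y ρN ρM t

noncomputable instance (X : Subgroup (H × G)) (Y : Subgroup (K × H))
    (ρN : Y →* Module.End R N) (ρM : X →* Module.End R M) (t : H) :
    AddCommGroup (SmallTensor X Y ρN ρM t) := by
  unfold SmallTensor; infer_instance

noncomputable instance (X : Subgroup (H × G)) (Y : Subgroup (K × H))
    (ρN : Y →* Module.End R N) (ρM : X →* Module.End R M) (t : H) :
    Module R (SmallTensor X Y ρN ρM t) := by
  unfold SmallTensor; infer_instance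

namespace MackeyProof

section Generic
variable {R : Type*} [CommRing R] {Γ : Type*} [Group Γ] (X : Subgroup Γ)
  {M : Type*} [AddCommGroup M] [Module R M] (ρ : X →* Module.End R M)

open MonoidAlgebra

/-- `m ↦ gen γ 1 m` as a linear map. -/
noncomputable def genLin (γ : Γ) : M →ₗ[R] Ind R Γ X M ρ :=
  (indRel R Γ X M ρ).mkQ ∘ₗ (TensorProduct.mk R (MonoidAlgebra R Γ) M (single γ 1))

lemma genLin_apply (γ : Γ) (m : M) : genLin X ρ γ m = Ind.gen R Γ X M ρ γ 1 m := rfl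

lemma gen_eq_smul (γ : Γ) (c : R) (m : M) :
    Ind.gen R Γ X M ρ γ c m = c • genLin X ρ γ m := by
  show Submodule.Quotient.mk _ = c • Submodule.Quotient.mk _
  erw [← Submodule.Quotient.mk_smul]
  congr 1
  show _ = c • ((MonoidAlgebra.single γ (1:R)) ⊗ₜ[R] m)
  rw [TensorProduct.smul_tmul', MonoidAlgebra.smul_single', mul_one]

lemma gen_rel (γ : Γ) (c : R) (x : X) (m : M) :
    Ind.gen R Γ X M ρ γ c (ρ x m) = Ind.gen R Γ X M ρ (γ * (x : Γ)) c m := by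
  show Submodule.Quotient.mk _ = Submodule.Quotient.mk _
  rw [Submodule.Quotient.eq]
  have hc : (MonoidAlgebra.single γ c : MonoidAlgebra R Γ) ⊗ₜ[R] (ρ x m)
      - MonoidAlgebra.single (γ * (x : Γ)) c ⊗ₜ[R] m
      = c • ((MonoidAlgebra.single γ (1:R)) ⊗ₜ[R] (ρ x m)
        - (MonoidAlgebra.single (γ * (x : Γ)) (1:R)) ⊗ₜ[R] m) := by
    rw [smul_sub, TensorProduct.smul_tmul', TensorProduct.smul_tmul',
      MonoidAlgebra.smul_single', MonoidAlgebra.smul_single', mul_one]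
  rw [hc]
  refine Submodule.smul_mem _ c ?_
  rw [show (MonoidAlgebra.single γ (1:R)) ⊗ₜ[R] (ρ x m)
      - (MonoidAlgebra.single (γ * (x : Γ)) (1:R)) ⊗ₜ[R] m
      = -((MonoidAlgebra.single (γ * (x : Γ)) (1:R)) ⊗ₜ[R] m
        - (MonoidAlgebra.single γ (1:R)) ⊗ₜ[R] (ρ x m)) by abel]
  exact Submodule.neg_mem _ (Submodule.subset_span ⟨γ, x, m, rfl⟩)

/-- left multiplication action of `Γ` on the induced module. -/
noncomputable def rhoInd : Γ →* Module.End R (Ind R Γ X M ρ) where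
  toFun γ := Submodule.mapQ _ _
    (TensorProduct.map (LinearMap.mulLeft R (single γ (1:R))) LinearMap.id)
    (by
      rw [indRel, Submodule.span_le]
      rintro z ⟨δ, x, m, rfl⟩
      simp only [SetLike.mem_coe, Submodule.mem_comap, map_sub, TensorProduct.map_tmul,
        LinearMap.mulLeft_apply, LinearMap.id_apply, MonoidAlgebra.single_mul_single,
        one_mul]
      exact Submodule.subset_span ⟨γ * δ, x, m, by rw [mul_assoc]⟩)
  map_one' := by
    refine Submodule.linearMap_qext _ (TensorProduct.ext' fun a m => ?_)
    show Submodule.Quotient.mk ((MonoidAlgebra.single (1:Γ) (1:R) * a) ⊗ₜ[R] m)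
      = Submodule.Quotient.mk (a ⊗ₜ[R] m)
    rw [← MonoidAlgebra.one_def, one_mul]
  map_mul' γ δ := by
    refine Submodule.linearMap_qext _ (TensorProduct.ext' fun a m => ?_)
    show Submodule.Quotient.mk ((MonoidAlgebra.single (γ * δ) (1:R) * a) ⊗ₜ[R] m)
      = Submodule.Quotient.mk
        ((MonoidAlgebra.single γ (1:R) * (MonoidAlgebra.single δ (1:R) * a)) ⊗ₜ[R] m)
    rw [← mul_assoc, MonoidAlgebra.single_mul_single, one_mul]

lemma rhoInd_gen (γ δ : Γ) (c : R) (m : M) :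
    rhoInd X ρ γ (Ind.gen R Γ X M ρ δ c m) = Ind.gen R Γ X M ρ (γ * δ) c m := by
  show Submodule.Quotient.mk ((MonoidAlgebra.single γ (1:R) * MonoidAlgebra.single δ c) ⊗ₜ[R] m)
    = Submodule.Quotient.mk (MonoidAlgebra.single (γ * δ) c ⊗ₜ[R] m)
  rw [MonoidAlgebra.single_mul_single, one_mul]

lemma rhoInd_genLin (γ δ : Γ) (m : M) :
    rhoInd X ρ γ (genLin X ρ δ m) = genLin X ρ (γ * δ) m := by
  rw [genLin_apply, genLin_apply, rhoInd_gen]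

end Generic
end MackeyProof
namespace MackeyProof
section Generic
variable {R : Type*} [CommRing R] {Γ : Type*} [Group Γ] (X : Subgroup Γ)
  {M : Type*} [AddCommGroup M] [Module R M] (ρ : X →* Module.End R M)

/-- ext principle for linear maps out of `Ind`. -/
lemma ind_hom_ext {V : Type*} [AddCommGroup V] [Module R V]
    {f g : Ind R Γ X M ρ →ₗ[R] V}
    (h : ∀ (γ : Γ) (m : M),
      f (Ind.gen R Γ X M ρ γ 1 m) = g (Ind.gen R Γ X M ρ γ 1 m)) : f = g := by
  refine Submodule.linearMap_qext _ (TensorProduct.ext (MonoidAlgebra.lhom_ext' fun γ =>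
    LinearMap.ext_ring (LinearMap.ext fun m => ?_)))
  exact h γ m

end Generic
end MackeyProof
namespace MackeyProof
section Main
variable {R K H G N M : Type u} [CommRing R] [Group K] [Group H] [Group G]
  [AddCommGroup N] [Module R N] [AddCommGroup M] [Module R M]
variable (X : Subgroup (H × G)) (Y : Subgroup (K × H))
  (ρN : Y →* Module.End R N) (ρM : X →* Module.End R M)

lemma star_mem_iff {t : H} {p : K × G} :
    p ∈ starSubgroup X Y t ↔ ∃ h : H, (p.1, h) ∈ Y ∧ (t⁻¹ * h * t, p.2) ∈ X :=
  Iff.rfl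

/-- generator of `smallRel` (restated). -/
lemma smallRel_gen_mem (t : H) {d : H} (h1 : ((1 : K), d) ∈ Y)
    (h2 : (t⁻¹ * d * t, (1 : G)) ∈ X) (hd : ((1 : K), d⁻¹) ∈ Y) (n : N) (m : M) :
    (ρN ⟨((1 : K), d⁻¹), hd⟩ n) ⊗ₜ[R] m - n ⊗ₜ[R] (ρM ⟨(t⁻¹ * d * t, (1 : G)), h2⟩ m)
      ∈ smallRel X Y ρN ρM t := by
  refine Submodule.subset_span ⟨d, h1, h2, n, m, ?_⟩
  rfl

lemma small_indep (t : H) (k : K) (g : G) {h h' : H}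
    (hY : (k, h) ∈ Y) (hY' : (k, h') ∈ Y)
    (hX : (t⁻¹ * h * t, g) ∈ X) (hX' : (t⁻¹ * h' * t, g) ∈ X) (n : N) (m : M) :
    (Submodule.Quotient.mk ((ρN ⟨(k, h), hY⟩ n) ⊗ₜ[R] (ρM ⟨(t⁻¹ * h * t, g), hX⟩ m))
        : SmallTensor X Y ρN ρM t) =
    Submodule.Quotient.mk ((ρN ⟨(k, h'), hY'⟩ n) ⊗ₜ[R] (ρM ⟨(t⁻¹ * h' * t, g), hX'⟩ m)) := by
  set d : H := h * h'⁻¹ with hdd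
  have h1 : ((1 : K), d) ∈ Y := by
    have := Y.mul_mem hY (Y.inv_mem hY')
    simpa using this
  have hd : ((1 : K), d⁻¹) ∈ Y := by simpa using Y.inv_mem h1
  have h2 : (t⁻¹ * d * t, (1 : G)) ∈ X := by
    have := X.mul_mem hX (X.inv_mem hX')
    simpa [hdd, mul_assoc] using this
  rw [Submodule.Quotient.eq]
  have k1 : (⟨((1 : K), d⁻¹), hd⟩ : Y) * ⟨(k, h), hY⟩ = ⟨(k, h'), hY'⟩ := by
    ext
    · simp
    · simp only [Subgroup.coe_mul, Prod.snd_mul, hdd]; group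
  have k2 : (⟨(t⁻¹ * d * t, (1 : G)), h2⟩ : X) * ⟨(t⁻¹ * h' * t, g), hX'⟩
      = ⟨(t⁻¹ * h * t, g), hX⟩ := by
    ext
    · simp only [Subgroup.coe_mul, Prod.fst_mul, hdd]; group
    · simp
  have e1 : ρN ⟨(k, h'), hY'⟩ n = ρN ⟨((1 : K), d⁻¹), hd⟩ (ρN ⟨(k, h), hY⟩ n) := by
    rw [← Module.End.mul_apply, ← map_mul, k1]
  have e2 : ρM ⟨(t⁻¹ * h * t, g), hX⟩ m
      = ρM ⟨(t⁻¹ * d * t, (1 : G)), h2⟩ (ρM ⟨(t⁻¹ * h' * t, g), hX'⟩ m) := by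
    rw [← Module.End.mul_apply, ← map_mul, k2]
  rw [e1, e2]
  have := smallRel_gen_mem X Y ρN ρM t h1 h2 hd (ρN ⟨(k, h), hY⟩ n)
    (ρM ⟨(t⁻¹ * h' * t, g), hX'⟩ m)
  have h3 := Submodule.neg_mem _ this
  rw [neg_sub] at h3
  exact h3

/-- Auxiliary endomorphism of `SmallTensor`, given explicit witnesses. -/
noncomputable def rhoSAux (t : H) (k : K) (g : G) (h : H)
    (hY : (k, h) ∈ Y) (hX : (t⁻¹ * h * t, g) ∈ X) :
    Module.End R (SmallTensor X Y ρN ρM t) :=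
  Submodule.mapQ _ _
    (TensorProduct.map (ρN ⟨(k, h), hY⟩) (ρM ⟨(t⁻¹ * h * t, g), hX⟩))
    (by
      rw [smallRel, Submodule.span_le]
      rintro z ⟨d, h1, h2, n, m, rfl⟩
      simp only [SetLike.mem_coe, Submodule.mem_comap, map_sub, TensorProduct.map_tmul]
      set e : H := h * d * h⁻¹ with hee
      have he1 : ((1 : K), e) ∈ Y := by
        have := Y.mul_mem (Y.mul_mem hY h1) (Y.inv_mem hY)
        simpa [hee, mul_assoc] using this
      have hed : ((1 : K), e⁻¹) ∈ Y := by simpa using Y.inv_mem he1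
      have he2 : (t⁻¹ * e * t, (1 : G)) ∈ X := by
        have := X.mul_mem (X.mul_mem hX h2) (X.inv_mem hX)
        simpa [hee, mul_assoc] using this
      have k1 : (⟨(k, h), hY⟩ : Y) * ⟨((1:K), d⁻¹), by simpa using Y.inv_mem h1⟩
          = ⟨((1 : K), e⁻¹), hed⟩ * ⟨(k, h), hY⟩ := by
        ext
        · simp
        · simp only [Subgroup.coe_mul, Prod.snd_mul, hee]; group
      have k2 : (⟨(t⁻¹ * h * t, g), hX⟩ : X) * ⟨(t⁻¹ * d * t, (1:G)), h2⟩
          = ⟨(t⁻¹ * e * t, (1 : G)), he2⟩ * ⟨(t⁻¹ * h * t, g), hX⟩ := by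
        ext
        · simp only [Subgroup.coe_mul, Prod.fst_mul, hee]; group
        · simp
      have e1 : ρN ⟨(k, h), hY⟩ (ρN ⟨((1:K), d⁻¹), by simpa using Y.inv_mem h1⟩ n)
          = ρN ⟨((1 : K), e⁻¹), hed⟩ (ρN ⟨(k, h), hY⟩ n) := by
        rw [← Module.End.mul_apply, ← map_mul, k1, map_mul, Module.End.mul_apply]
      have e2 : ρM ⟨(t⁻¹ * h * t, g), hX⟩ (ρM ⟨(t⁻¹ * d * t, (1:G)), h2⟩ m)
          = ρM ⟨(t⁻¹ * e * t, (1 : G)), he2⟩ (ρM ⟨(t⁻¹ * h * t, g), hX⟩ m) := by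
        rw [← Module.End.mul_apply, ← map_mul, k2, map_mul, Module.End.mul_apply]
      rw [e1, e2]
      exact smallRel_gen_mem X Y ρN ρM t he1 he2 hed _ _)

lemma rhoSAux_mk (t : H) (k : K) (g : G) (h : H)
    (hY : (k, h) ∈ Y) (hX : (t⁻¹ * h * t, g) ∈ X) (n : N) (m : M) :
    rhoSAux X Y ρN ρM t k g h hY hX (Submodule.Quotient.mk (n ⊗ₜ[R] m)) =
      Submodule.Quotient.mk ((ρN ⟨(k, h), hY⟩ n) ⊗ₜ[R] (ρM ⟨(t⁻¹ * h * t, g), hX⟩ m)) :=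
  rfl

lemma rhoSAux_indep (t : H) (k : K) (g : G) {h h' : H}
    (hY : (k, h) ∈ Y) (hY' : (k, h') ∈ Y)
    (hX : (t⁻¹ * h * t, g) ∈ X) (hX' : (t⁻¹ * h' * t, g) ∈ X) :
    rhoSAux X Y ρN ρM t k g h hY hX = rhoSAux X Y ρN ρM t k g h' hY' hX' := by
  refine Submodule.linearMap_qext _ (TensorProduct.ext' fun n m => ?_)
  exact small_indep X Y ρN ρM t k g hY hY' hX hX' n m

noncomputable def rhoSFun (t : H) (z : starSubgroup X Y t) :
    Module.End R (SmallTensor X Y ρN ρM t) :=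
  rhoSAux X Y ρN ρM t z.1.1 z.1.2 z.2.choose z.2.choose_spec.1 z.2.choose_spec.2

lemma rhoSFun_eq (t : H) (z : starSubgroup X Y t) (h : H)
    (hY : (z.1.1, h) ∈ Y) (hX : (t⁻¹ * h * t, z.1.2) ∈ X) :
    rhoSFun X Y ρN ρM t z = rhoSAux X Y ρN ρM t z.1.1 z.1.2 h hY hX :=
  rhoSAux_indep X Y ρN ρM t z.1.1 z.1.2 z.2.choose_spec.1 hY z.2.choose_spec.2 hX

/-- The action of the star subgroup on `SmallTensor`. -/
noncomputable def rhoS (t : H) :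
    (starSubgroup X Y t) →* Module.End R (SmallTensor X Y ρN ρM t) where
  toFun := rhoSFun X Y ρN ρM t
  map_one' := by
    show rhoSFun X Y ρN ρM t 1 = 1
    rw [rhoSFun_eq X Y ρN ρM t 1 1 (by exact Y.one_mem)
      (by simp only [mul_one, inv_mul_cancel]; exact X.one_mem)]
    refine Submodule.linearMap_qext _ (TensorProduct.ext' fun n m => ?_)
    have e1 : (⟨(((1 : starSubgroup X Y t) : K × G).1, (1:H)), by exact Y.one_mem⟩ : Y)
        = 1 := by
      ext
      · simp
      · simp
    have e2 : (⟨(t⁻¹ * 1 * t, ((1 : starSubgroup X Y t) : K × G).2),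
        by simp only [mul_one, inv_mul_cancel]; exact X.one_mem⟩ : X) = 1 := by
      ext
      · simp
      · simp
    erw [LinearMap.comp_apply, Submodule.mkQ_apply]
    erw [TensorProduct.map_tmul]
    rw [e1, e2]
    simp only [map_one]
    rfl
  map_mul' z w := by
    show rhoSFun X Y ρN ρM t (z * w) = rhoSFun X Y ρN ρM t z * rhoSFun X Y ρN ρM t w
    have hYz := z.2.choose_spec.1
    have hXz := z.2.choose_spec.2
    have hYw := w.2.choose_spec.1
    have hXw := w.2.choose_spec.2
    have hYmem : (((z * w : starSubgroup X Y t) : K × G).1, z.2.choose * w.2.choose) ∈ Y := by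
      have := Y.mul_mem hYz hYw
      simpa using this
    have hXmem : (t⁻¹ * (z.2.choose * w.2.choose) * t,
        ((z * w : starSubgroup X Y t) : K × G).2) ∈ X := by
      have := X.mul_mem hXz hXw
      have hgp : ((t⁻¹ * z.2.choose * t) * (t⁻¹ * w.2.choose * t) : H)
          = t⁻¹ * (z.2.choose * w.2.choose) * t := by group
      simpa [hgp] using this
    rw [rhoSFun_eq X Y ρN ρM t (z * w) (z.2.choose * w.2.choose) hYmem hXmem]
    refine Submodule.linearMap_qext _ (TensorProduct.ext' fun n m => ?_)
    show rhoSAux X Y ρN ρM t _ _ _ hYmem hXmem (Submodule.Quotient.mk (n ⊗ₜ[R] m))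
      = (rhoSAux X Y ρN ρM t z.1.1 z.1.2 _ hYz hXz)
        ((rhoSAux X Y ρN ρM t w.1.1 w.1.2 _ hYw hXw) (Submodule.Quotient.mk (n ⊗ₜ[R] m)))
    rw [rhoSAux_mk, rhoSAux_mk, rhoSAux_mk]
    congr 1
    have eN : (⟨(((z*w : starSubgroup X Y t) : K × G).1, z.2.choose * w.2.choose), hYmem⟩ : Y)
        = ⟨(z.1.1, z.2.choose), hYz⟩ * ⟨(w.1.1, w.2.choose), hYw⟩ := by
      ext
      · simp
      · simp
    have eM : (⟨(t⁻¹ * (z.2.choose * w.2.choose) * t,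
          ((z*w : starSubgroup X Y t) : K × G).2), hXmem⟩ : X)
        = ⟨(t⁻¹ * z.2.choose * t, z.1.2), hXz⟩ * ⟨(t⁻¹ * w.2.choose * t, w.1.2), hXw⟩ := by
      ext
      · simp only [Subgroup.coe_mul, Prod.fst_mul]; group
      · simp
    rw [eN, eM, map_mul, map_mul]
    rfl

lemma rhoS_spec (t : H) (k : K) (g : G) (h : H) (hY : (k, h) ∈ Y)
    (hX : (t⁻¹ * h * t, g) ∈ X) (n : N) (m : M) :
    rhoS X Y ρN ρM t ⟨(k, g), ⟨h, hY, hX⟩⟩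
        (Submodule.Quotient.mk (n ⊗ₜ[R] m) : SmallTensor X Y ρN ρM t) =
      Submodule.Quotient.mk ((ρN ⟨(k, h), hY⟩ n) ⊗ₜ[R] (ρM ⟨(t⁻¹ * h * t, g), hX⟩ m)) := by
  show rhoSFun X Y ρN ρM t ⟨(k, g), ⟨h, hY, hX⟩⟩ (Submodule.Quotient.mk (n ⊗ₜ[R] m)) = _
  rw [rhoSFun_eq X Y ρN ρM t ⟨(k, g), ⟨h, hY, hX⟩⟩ h hY hX, rhoSAux_mk]

end Main
end MackeyProof
namespace MackeyProof
section Main2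
variable {R K H G N M : Type u} [CommRing R] [Group K] [Group H] [Group G]
  [AddCommGroup N] [Module R N] [AddCommGroup M] [Module R M]
variable (X : Subgroup (H × G)) (Y : Subgroup (K × H))
  (ρN : Y →* Module.End R N) (ρM : X →* Module.End R M)

local notation "IndY" => Ind R (K × H) Y N ρN
local notation "IndX" => Ind R (H × G) X M ρM
local notation "bigRel" =>
  rhRel IndY IndX (rhoInd Y ρN) (rhoInd X ρM)
local notation "BigL" => (IndY ⊗[R] IndX) ⧸ bigRel

/-- The `RH`-balancing relation in the big tensor quotient. -/
lemma rhRel_mk_eq (h : H) (x : IndY) (y : IndX) :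
    (Submodule.Quotient.mk ((rhoInd Y ρN ((1 : K), h⁻¹) x) ⊗ₜ[R] y) : BigL) =
      Submodule.Quotient.mk (x ⊗ₜ[R] (rhoInd X ρM (h, (1 : G)) y)) := by
  rw [Submodule.Quotient.eq]
  exact Submodule.subset_span ⟨h, x, y, rfl⟩

/-- The action of `K × G` on the big tensor quotient. -/
noncomputable def rhoT : (K × G) →* Module.End R BigL where
  toFun p := Submodule.mapQ _ _
    (TensorProduct.map (rhoInd Y ρN (p.1, (1 : H))) (rhoInd X ρM ((1 : H), p.2)))
    (by
      rw [rhRel, Submodule.span_le]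
      rintro z ⟨h, x, y, rfl⟩
      simp only [SetLike.mem_coe, Submodule.mem_comap, map_sub, TensorProduct.map_tmul]
      have c1 : rhoInd Y ρN (p.1, (1 : H)) (rhoInd Y ρN ((1 : K), h⁻¹) x)
          = rhoInd Y ρN ((1 : K), h⁻¹) (rhoInd Y ρN (p.1, (1 : H)) x) := by
        rw [← Module.End.mul_apply, ← map_mul, ← Module.End.mul_apply, ← map_mul]
        congr 2
        ext <;> simp
      have c2 : rhoInd X ρM ((1 : H), p.2) (rhoInd X ρM (h, (1 : G)) y)
          = rhoInd X ρM (h, (1 : G)) (rhoInd X ρM ((1 : H), p.2) y) := by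
        rw [← Module.End.mul_apply, ← map_mul, ← Module.End.mul_apply, ← map_mul]
        congr 2
        ext <;> simp
      rw [c1, c2]
      exact Submodule.subset_span
        ⟨h, rhoInd Y ρN (p.1, (1 : H)) x, rhoInd X ρM ((1 : H), p.2) y, rfl⟩)
  map_one' := by
    refine Submodule.linearMap_qext _ (TensorProduct.ext' fun x y => ?_)
    show Submodule.Quotient.mk
        ((rhoInd Y ρN ((1:K), (1:H)) x) ⊗ₜ[R] (rhoInd X ρM ((1:H), (1:G)) y))
      = (1 ∘ₗ (bigRel).mkQ) (x ⊗ₜ[R] y)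
    rw [show ((1:K), (1:H)) = (1 : K × H) from rfl, show ((1:H), (1:G)) = (1 : H × G) from rfl,
      map_one, map_one]
    rfl
  map_mul' p q := by
    refine Submodule.linearMap_qext _ (TensorProduct.ext' fun x y => ?_)
    show Submodule.Quotient.mk
        ((rhoInd Y ρN ((p*q).1, (1:H)) x) ⊗ₜ[R] (rhoInd X ρM ((1:H), (p*q).2) y))
      = Submodule.Quotient.mk
        ((rhoInd Y ρN (p.1, (1:H)) (rhoInd Y ρN (q.1, (1:H)) x)) ⊗ₜ[R]
          (rhoInd X ρM ((1:H), p.2) (rhoInd X ρM ((1:H), q.2) y)))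
    rw [← Module.End.mul_apply, ← map_mul, ← Module.End.mul_apply, ← map_mul]
    have e1 : ((p.1, (1:H)) : K × H) * (q.1, (1:H)) = ((p*q).1, (1:H)) := by
      ext <;> simp
    have e2 : (((1:H), p.2) : H × G) * ((1:H), q.2) = ((1:H), (p*q).2) := by
      ext <;> simp
    rw [e1, e2]
  
lemma rhoT_mk (k : K) (g : G) (x : IndY) (y : IndX) :
    rhoT X Y ρN ρM (k, g) (Submodule.Quotient.mk (x ⊗ₜ[R] y)) =
      Submodule.Quotient.mk
        ((rhoInd Y ρN (k, (1 : H)) x) ⊗ₜ[R] (rhoInd X ρM ((1 : H), g) y)) :=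
  rfl

variable (dcReps : Set H)
  (hreps : ∀ h : H, ∃! t : H, t ∈ dcReps ∧
    ∃ a ∈ Y.map (MonoidHom.snd K H), ∃ b ∈ X.map (MonoidHom.fst H G), h = a * t * b)

/-- The chosen double coset representative of `w`. -/
noncomputable def dcT (w : H) : H := (hreps w).choose

lemma dcT_mem (w : H) : dcT X Y dcReps hreps w ∈ dcReps := (hreps w).choose_spec.1.1

lemma dcT_decomp (w : H) :
    ∃ a ∈ Y.map (MonoidHom.snd K H), ∃ b ∈ X.map (MonoidHom.fst H G),
      w = a * dcT X Y dcReps hreps w * b := (hreps w).choose_spec.1.2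

lemma dcT_eq_of {w t' : H} (ht' : t' ∈ dcReps) {κ : K} {a b : H} {γ : G}
    (hY : (κ, a) ∈ Y) (hX : (b, γ) ∈ X) (heq : w = a * t' * b) :
    dcT X Y dcReps hreps w = t' :=
  ((hreps w).choose_spec.2 t' ⟨ht', ⟨a, ⟨(κ, a), hY, rfl⟩, b, ⟨(b, γ), hX, rfl⟩, heq⟩⟩).symm

lemma dcT_decomp' (w : H) :
    ∃ p : (K × H) × (H × G), p.1 ∈ Y ∧ p.2 ∈ X ∧
      w = p.1.2 * dcT X Y dcReps hreps w * p.2.1 := by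
  obtain ⟨a, ⟨pa, hpa, ha⟩, b, ⟨pb, hpb, hb⟩, hw⟩ := dcT_decomp X Y dcReps hreps w
  exact ⟨((pa.1, a), (b, pb.2)), by simpa [← ha] using hpa, by simpa [← hb] using hpb, hw⟩

/-- Chosen full decomposition data `((κ, a), (b, γ))` with `w = a * (dcT w) * b`. -/
noncomputable def dcP (w : H) : (K × H) × (H × G) := (dcT_decomp' X Y dcReps hreps w).choose

lemma dcP_memY (w : H) : (dcP X Y dcReps hreps w).1 ∈ Y :=
  (dcT_decomp' X Y dcReps hreps w).choose_spec.1

lemma dcP_memX (w : H) : (dcP X Y dcReps hreps w).2 ∈ X :=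
  (dcT_decomp' X Y dcReps hreps w).choose_spec.2.1

lemma dcP_eq (w : H) :
    w = (dcP X Y dcReps hreps w).1.2 * dcT X Y dcReps hreps w * (dcP X Y dcReps hreps w).2.1 :=
  (dcT_decomp' X Y dcReps hreps w).choose_spec.2.2

local notation "IndS" t =>
  Ind R (K × G) (starSubgroup X Y t) (SmallTensor X Y ρN ρM t) (rhoS X Y ρN ρM t)
local notation "BigR" => ⨁ t : dcReps, Ind R (K × G) (starSubgroup X Y (t : H))
  (SmallTensor X Y ρN ρM (t : H)) (rhoS X Y ρN ρM (t : H))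

/-- The action of `K × G` on the direct sum. -/
noncomputable def rhoD : (K × G) →* Module.End R BigR where
  toFun p := DirectSum.toModule R dcReps _ (fun t =>
    (DirectSum.lof R dcReps _ t) ∘ₗ
      (rhoInd (starSubgroup X Y (t : H)) (rhoS X Y ρN ρM (t : H)) p))
  map_one' := by
    refine DirectSum.linearMap_ext _ fun t => ?_
    ext x
    simp [DirectSum.toModule_lof]
  map_mul' p q := by
    refine DirectSum.linearMap_ext _ fun t => ?_
    ext x
    simp [DirectSum.toModule_lof, map_mul]

lemma rhoD_lof (p : K × G) (t : dcReps) (x : IndS (t : H)) :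
    rhoD X Y ρN ρM dcReps p (DirectSum.lof R dcReps _ t x) =
      DirectSum.lof R dcReps _ t
        (rhoInd (starSubgroup X Y (t : H)) (rhoS X Y ρN ρM (t : H)) p x) :=
  DirectSum.toModule_lof R _ _

end Main2
end MackeyProof
namespace MackeyProof
section Main3
variable {R K H G N M : Type u} [CommRing R] [Group K] [Group H] [Group G]
  [AddCommGroup N] [Module R N] [AddCommGroup M] [Module R M]
variable (X : Subgroup (H × G)) (Y : Subgroup (K × H))
  (ρN : Y →* Module.End R N) (ρM : X →* Module.End R M)
variable (dcReps : Set H)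
  (hreps : ∀ h : H, ∃! t : H, t ∈ dcReps ∧
    ∃ a ∈ Y.map (MonoidHom.snd K H), ∃ b ∈ X.map (MonoidHom.fst H G), h = a * t * b)

local notation "BigR" => ⨁ t : dcReps, Ind R (K × G) (starSubgroup X Y (t : H))
  (SmallTensor X Y ρN ρM (t : H)) (rhoS X Y ρN ρM (t : H))

/-- The value of the Mackey map, given explicit double coset decomposition data. -/
noncomputable def coreWith (k : K) (g : G) (t : dcReps) (yp : K × H) (xp : H × G)
    (hY : yp ∈ Y) (hX : xp ∈ X) : (N ⊗[R] M) →ₗ[R] BigR :=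
  (DirectSum.lof R dcReps _ t) ∘ₗ
  (genLin (starSubgroup X Y (t : H)) (rhoS X Y ρN ρM (t : H)) (k * yp.1, g * xp.2⁻¹)) ∘ₗ
  (smallRel X Y ρN ρM (t : H)).mkQ ∘ₗ
  (TensorProduct.map (ρN ((⟨yp, hY⟩ : Y)⁻¹)) (ρM ⟨xp, hX⟩))

lemma coreWith_apply (k : K) (g : G) (t : dcReps) (yp : K × H) (xp : H × G)
    (hY : yp ∈ Y) (hX : xp ∈ X) (n : N) (m : M) :
    coreWith X Y ρN ρM dcReps k g t yp xp hY hX (n ⊗ₜ[R] m)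
      = DirectSum.lof R dcReps _ t
        (Ind.gen R (K × G) (starSubgroup X Y (t : H)) _ (rhoS X Y ρN ρM (t : H))
          (k * yp.1, g * xp.2⁻¹) 1
          (Submodule.Quotient.mk ((ρN ((⟨yp, hY⟩ : Y)⁻¹) n) ⊗ₜ[R] (ρM ⟨xp, hX⟩ m)))) :=
  rfl

lemma coreWith_indep (k : K) (g : G) (t : dcReps) (yp yp' : K × H) (xp xp' : H × G)
    (hY : yp ∈ Y) (hY' : yp' ∈ Y) (hX : xp ∈ X) (hX' : xp' ∈ X)
    (heq : yp.2 * (t : H) * xp.1 = yp'.2 * (t : H) * xp'.1) :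
    coreWith X Y ρN ρM dcReps k g t yp xp hY hX
      = coreWith X Y ρN ρM dcReps k g t yp' xp' hY' hX' := by
  refine TensorProduct.ext' fun n m => ?_
  have hYu : (yp'.1⁻¹ * yp.1, yp'.2⁻¹ * yp.2) ∈ Y := by
    have := Y.mul_mem (Y.inv_mem hY') hY
    exact this
  have key : (t : H)⁻¹ * (yp'.2⁻¹ * yp.2) * (t : H) = xp'.1 * xp.1⁻¹ := by
    have e : yp.2 * ↑t = yp'.2 * ↑t * xp'.1 * xp.1⁻¹ := by
      rw [show (yp'.2 * (↑t:H) * xp'.1 : H) = yp.2 * ↑t * xp.1 from heq.symm]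
      group
    calc (↑t:H)⁻¹ * (yp'.2⁻¹ * yp.2) * ↑t
        = (↑t:H)⁻¹ * yp'.2⁻¹ * (yp.2 * ↑t) := by group
      _ = (↑t:H)⁻¹ * yp'.2⁻¹ * (yp'.2 * ↑t * xp'.1 * xp.1⁻¹) := by rw [e]
      _ = xp'.1 * xp.1⁻¹ := by group
  have hXu : ((t : H)⁻¹ * (yp'.2⁻¹ * yp.2) * (t : H), xp'.2 * xp.2⁻¹) ∈ X := by
    rw [key]
    have := X.mul_mem hX' (X.inv_mem hX)
    exact this
  rw [coreWith_apply, coreWith_apply]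
  have egrp : ((k * yp.1, g * xp.2⁻¹) : K × G)
      = ((k * yp'.1, g * xp'.2⁻¹) : K × G) * (yp'.1⁻¹ * yp.1, xp'.2 * xp.2⁻¹) := by
    ext
    · show k * yp.1 = (k * yp'.1) * (yp'.1⁻¹ * yp.1)
      group
    · show g * xp.2⁻¹ = (g * xp'.2⁻¹) * (xp'.2 * xp.2⁻¹)
      group
  have hz : ((yp'.1⁻¹ * yp.1, xp'.2 * xp.2⁻¹) : K × G) ∈ starSubgroup X Y (t : H) :=
    ⟨yp'.2⁻¹ * yp.2, hYu, hXu⟩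
  have egrp2 : ((k * yp.1, g * xp.2⁻¹) : K × G)
      = ((k * yp'.1, g * xp'.2⁻¹) : K × G)
        * ((⟨(yp'.1⁻¹ * yp.1, xp'.2 * xp.2⁻¹), hz⟩ : starSubgroup X Y (t : H)) : K × G) :=
    egrp
  rw [egrp2]
  erw [← gen_rel (starSubgroup X Y (t : H)) (rhoS X Y ρN ρM (t : H))]
  congr 1
  rw [rhoS_spec X Y ρN ρM (t : H) (yp'.1⁻¹ * yp.1) (xp'.2 * xp.2⁻¹) (yp'.2⁻¹ * yp.2) hYu hXu]
  have eN : (⟨(yp'.1⁻¹ * yp.1, yp'.2⁻¹ * yp.2), hYu⟩ : Y) * (⟨yp, hY⟩ : Y)⁻¹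
      = (⟨yp', hY'⟩ : Y)⁻¹ := by
    ext
    · show (yp'.1⁻¹ * yp.1) * yp.1⁻¹ = yp'.1⁻¹
      group
    · show (yp'.2⁻¹ * yp.2) * yp.2⁻¹ = yp'.2⁻¹
      group
  have eM : (⟨((t : H)⁻¹ * (yp'.2⁻¹ * yp.2) * (t : H), xp'.2 * xp.2⁻¹), hXu⟩ : X)
      * (⟨xp, hX⟩ : X) = (⟨xp', hX'⟩ : X) := by
    ext
    · show ((t : H)⁻¹ * (yp'.2⁻¹ * yp.2) * (t : H)) * xp.1 = xp'.1
      rw [key]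
      group
    · show (xp'.2 * xp.2⁻¹) * xp.2 = xp'.2
      group
  have vN : ρN ⟨(yp'.1⁻¹ * yp.1, yp'.2⁻¹ * yp.2), hYu⟩ (ρN ((⟨yp, hY⟩ : Y)⁻¹) n)
      = ρN ((⟨yp', hY'⟩ : Y)⁻¹) n := by
    rw [← Module.End.mul_apply, ← map_mul, eN]
  have vM : ρM ⟨((t : H)⁻¹ * (yp'.2⁻¹ * yp.2) * (t : H), xp'.2 * xp.2⁻¹), hXu⟩
        (ρM (⟨xp, hX⟩ : X) m) = ρM (⟨xp', hX'⟩ : X) m := by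
    rw [← Module.End.mul_apply, ← map_mul, eM]
  rw [vN, vM]

/-- The Mackey map on `N ⊗ M`, with chosen decomposition data of `w`. -/
noncomputable def coreT (k : K) (w : H) (g : G) : (N ⊗[R] M) →ₗ[R] BigR :=
  coreWith X Y ρN ρM dcReps k g ⟨dcT X Y dcReps hreps w, dcT_mem X Y dcReps hreps w⟩
    (dcP X Y dcReps hreps w).1 (dcP X Y dcReps hreps w).2
    (dcP_memY X Y dcReps hreps w) (dcP_memX X Y dcReps hreps w)

lemma coreT_eq (k : K) (w : H) (g : G) (t : H) (ht : t ∈ dcReps)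
    (yp : K × H) (xp : H × G) (hY : yp ∈ Y) (hX : xp ∈ X)
    (heq : w = yp.2 * t * xp.1) :
    coreT X Y ρN ρM dcReps hreps k w g
      = coreWith X Y ρN ρM dcReps k g ⟨t, ht⟩ yp xp hY hX := by
  have htt : dcT X Y dcReps hreps w = t := by
    refine dcT_eq_of X Y dcReps hreps ht (κ := yp.1) (γ := xp.2) ?_ ?_ heq
    · simpa using hY
    · simpa using hX
  have hsub : (⟨dcT X Y dcReps hreps w, dcT_mem X Y dcReps hreps w⟩ : dcReps)
      = ⟨t, ht⟩ := Subtype.ext htt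
  rw [coreT, hsub]
  refine coreWith_indep X Y ρN ρM dcReps k g ⟨t, ht⟩ _ yp _ xp _ hY _ hX ?_
  show (dcP X Y dcReps hreps w).1.2 * t * (dcP X Y dcReps hreps w).2.1 = yp.2 * t * xp.1
  have hdec := dcP_eq X Y dcReps hreps w
  rw [htt] at hdec
  rw [← hdec, ← heq]

end Main3
end MackeyProof
namespace MackeyProof
section Main4
variable {R K H G N M : Type u} [CommRing R] [Group K] [Group H] [Group G]
  [AddCommGroup N] [Module R N] [AddCommGroup M] [Module R M]
variable (X : Subgroup (H × G)) (Y : Subgroup (K × H))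
  (ρN : Y →* Module.End R N) (ρM : X →* Module.End R M)
variable (dcReps : Set H)
  (hreps : ∀ h : H, ∃! t : H, t ∈ dcReps ∧
    ∃ a ∈ Y.map (MonoidHom.snd K H), ∃ b ∈ X.map (MonoidHom.fst H G), h = a * t * b)

/-- Moving an element of `Y` across the first factor. -/
lemma coreT_moveY (k : K) (w : H) (g : G) (κ₀ : K) (a₀ : H) (hY₀ : (κ₀, a₀) ∈ Y)
    (n : N) (m : M) :
    coreT X Y ρN ρM dcReps hreps (k * κ₀) (a₀⁻¹ * w) g (n ⊗ₜ[R] m)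
      = coreT X Y ρN ρM dcReps hreps k w g ((ρN ⟨(κ₀, a₀), hY₀⟩ n) ⊗ₜ[R] m) := by
  set d := dcP X Y dcReps hreps w with hd
  set t := dcT X Y dcReps hreps w with ht
  have hmemY := dcP_memY X Y dcReps hreps w
  have hmemX := dcP_memX X Y dcReps hreps w
  have hw := dcP_eq X Y dcReps hreps w
  have hY1 : ((κ₀, a₀) : K × H)⁻¹ * d.1 ∈ Y := Y.mul_mem (Y.inv_mem hY₀) hmemY
  have e1 : coreT X Y ρN ρM dcReps hreps (k * κ₀) (a₀⁻¹ * w) g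
      = coreWith X Y ρN ρM dcReps (k * κ₀) g ⟨t, dcT_mem X Y dcReps hreps w⟩
        (((κ₀, a₀) : K × H)⁻¹ * d.1) d.2 hY1 hmemX := by
    refine coreT_eq X Y ρN ρM dcReps hreps (k * κ₀) (a₀⁻¹ * w) g t
      (dcT_mem X Y dcReps hreps w) _ _ hY1 hmemX ?_
    show a₀⁻¹ * w = (a₀⁻¹ * d.1.2) * t * d.2.1
    rw [hw]
    group
    rfl
  have e2 : coreT X Y ρN ρM dcReps hreps k w g
      = coreWith X Y ρN ρM dcReps k g ⟨t, dcT_mem X Y dcReps hreps w⟩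
        d.1 d.2 hmemY hmemX := by
    refine coreT_eq X Y ρN ρM dcReps hreps k w g t
      (dcT_mem X Y dcReps hreps w) _ _ hmemY hmemX ?_
    simpa using hw
  rw [e1, e2, coreWith_apply, coreWith_apply]
  have ek : (k * κ₀) * (((κ₀, a₀) : K × H)⁻¹ * d.1).1 = k * d.1.1 := by
    show (k * κ₀) * (κ₀⁻¹ * d.1.1) = k * d.1.1
    group
  have eY : (⟨((κ₀, a₀) : K × H)⁻¹ * d.1, hY1⟩ : Y)⁻¹
      = (⟨d.1, hmemY⟩ : Y)⁻¹ * ⟨(κ₀, a₀), hY₀⟩ := by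
    ext
    · show (κ₀⁻¹ * d.1.1)⁻¹ = d.1.1⁻¹ * κ₀
      group
    · show (a₀⁻¹ * d.1.2)⁻¹ = d.1.2⁻¹ * a₀
      group
  have vN : ρN ((⟨((κ₀, a₀) : K × H)⁻¹ * d.1, hY1⟩ : Y)⁻¹) n
      = ρN ((⟨d.1, hmemY⟩ : Y)⁻¹) (ρN ⟨(κ₀, a₀), hY₀⟩ n) := by
    rw [eY, map_mul, Module.End.mul_apply]
  rw [ek, vN]

/-- Moving an element of `X` across the second factor. -/
lemma coreT_moveX (k : K) (w : H) (g : G) (b₀ : H) (γ₀ : G) (hX₀ : (b₀, γ₀) ∈ X)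
    (n : N) (m : M) :
    coreT X Y ρN ρM dcReps hreps k (w * b₀) (g * γ₀) (n ⊗ₜ[R] m)
      = coreT X Y ρN ρM dcReps hreps k w g (n ⊗ₜ[R] (ρM ⟨(b₀, γ₀), hX₀⟩ m)) := by
  set d := dcP X Y dcReps hreps w with hd
  set t := dcT X Y dcReps hreps w with ht
  have hmemY := dcP_memY X Y dcReps hreps w
  have hmemX := dcP_memX X Y dcReps hreps w
  have hw := dcP_eq X Y dcReps hreps w
  have hX1 : d.2 * ((b₀, γ₀) : H × G) ∈ X := X.mul_mem hmemX hX₀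
  have e1 : coreT X Y ρN ρM dcReps hreps k (w * b₀) (g * γ₀)
      = coreWith X Y ρN ρM dcReps k (g * γ₀) ⟨t, dcT_mem X Y dcReps hreps w⟩
        d.1 (d.2 * ((b₀, γ₀) : H × G)) hmemY hX1 := by
    refine coreT_eq X Y ρN ρM dcReps hreps k (w * b₀) (g * γ₀) t
      (dcT_mem X Y dcReps hreps w) _ _ hmemY hX1 ?_
    show w * b₀ = d.1.2 * t * (d.2.1 * b₀)
    rw [hw]
    group
    rfl
  have e2 : coreT X Y ρN ρM dcReps hreps k w g
      = coreWith X Y ρN ρM dcReps k g ⟨t, dcT_mem X Y dcReps hreps w⟩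
        d.1 d.2 hmemY hmemX := by
    refine coreT_eq X Y ρN ρM dcReps hreps k w g t
      (dcT_mem X Y dcReps hreps w) _ _ hmemY hmemX ?_
    simpa using hw
  rw [e1, e2, coreWith_apply, coreWith_apply]
  have eg : (g * γ₀) * (d.2 * ((b₀, γ₀) : H × G)).2⁻¹ = g * d.2.2⁻¹ := by
    show (g * γ₀) * (d.2.2 * γ₀)⁻¹ = g * d.2.2⁻¹
    group
  have eX : (⟨d.2 * ((b₀, γ₀) : H × G), hX1⟩ : X)
      = (⟨d.2, hmemX⟩ : X) * ⟨(b₀, γ₀), hX₀⟩ := by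
    ext
    · rfl
    · rfl
  have vM : ρM (⟨d.2 * ((b₀, γ₀) : H × G), hX1⟩ : X) m
      = ρM (⟨d.2, hmemX⟩ : X) (ρM ⟨(b₀, γ₀), hX₀⟩ m) := by
    rw [eX, map_mul, Module.End.mul_apply]
  rw [eg, vM]

/-- Equivariance of `coreT`. -/
lemma coreT_equivariant (k₀ k : K) (w : H) (g₀ g : G) (z : N ⊗[R] M) :
    coreT X Y ρN ρM dcReps hreps (k₀ * k) w (g₀ * g) z
      = rhoD X Y ρN ρM dcReps (k₀, g₀) (coreT X Y ρN ρM dcReps hreps k w g z) := by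
  induction z using TensorProduct.induction_on with
  | zero => simp
  | add x y hx hy => simp [map_add, hx, hy]
  | tmul n m =>
    rw [coreT, coreT, coreWith_apply, coreWith_apply, rhoD_lof]
    erw [rhoInd_gen]
    congr 2
    ext
    · show k₀ * k * (dcP X Y dcReps hreps w).1.1
        = k₀ * (k * (dcP X Y dcReps hreps w).1.1)
      group
    · show g₀ * g * (dcP X Y dcReps hreps w).2.2⁻¹
        = g₀ * (g * (dcP X Y dcReps hreps w).2.2⁻¹)
      group

end Main4
end MackeyProof
namespace MackeyProof
section Main5
variable {R K H G N M : Type u} [CommRing R] [Group K] [Group H] [Group G]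
  [AddCommGroup N] [Module R N] [AddCommGroup M] [Module R M]
variable (X : Subgroup (H × G)) (Y : Subgroup (K × H))
  (ρN : Y →* Module.End R N) (ρM : X →* Module.End R M)
variable (dcReps : Set H)
  (hreps : ∀ h : H, ∃! t : H, t ∈ dcReps ∧
    ∃ a ∈ Y.map (MonoidHom.snd K H), ∃ b ∈ X.map (MonoidHom.fst H G), h = a * t * b)

local notation "BigR" => ⨁ t : dcReps, Ind R (K × G) (starSubgroup X Y (t : H))
  (SmallTensor X Y ρN ρM (t : H)) (rhoS X Y ρN ρM (t : H))
local notation "IndY" => Ind R (K × H) Y N ρN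
local notation "IndX" => Ind R (H × G) X M ρM
local notation "bigRel" => rhRel IndY IndX (rhoInd Y ρN) (rhoInd X ρM)
local notation "BigL" => (IndY ⊗[R] IndX) ⧸ bigRel

noncomputable def Fcur : MonoidAlgebra R (K × H) →ₗ[R]
    (MonoidAlgebra R (H × G) →ₗ[R] ((N ⊗[R] M) →ₗ[R] BigR)) :=
  (Finsupp.lsum R fun p => LinearMap.toSpanSingleton R _
    ((Finsupp.lsum R fun q => LinearMap.toSpanSingleton R _
      (coreT X Y ρN ρM dcReps hreps p.1 (p.2⁻¹ * q.1) q.2)) ∘ₗ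
        (MonoidAlgebra.coeffLinearEquiv R).toLinearMap)) ∘ₗ
    (MonoidAlgebra.coeffLinearEquiv R).toLinearMap

lemma Fcur_single (p : K × H) (q : H × G) (c c' : R) :
    Fcur X Y ρN ρM dcReps hreps (MonoidAlgebra.single p c) (MonoidAlgebra.single q c')
      = c • c' • coreT X Y ρN ρM dcReps hreps p.1 (p.2⁻¹ * q.1) q.2 := by
  unfold Fcur
  simp only [LinearMap.comp_apply, LinearEquiv.coe_coe, MonoidAlgebra.coeffLinearEquiv_apply,
    MonoidAlgebra.coeff_single, Finsupp.lsum_single, LinearMap.toSpanSingleton_apply,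
    LinearMap.smul_apply]

noncomputable def F4 :
    ((MonoidAlgebra R (K × H) ⊗[R] N) ⊗[R] (MonoidAlgebra R (H × G) ⊗[R] M)) →ₗ[R] BigR :=
  (TensorProduct.lift (TensorProduct.lift (Fcur X Y ρN ρM dcReps hreps))) ∘ₗ
    (TensorProduct.tensorTensorTensorComm R (MonoidAlgebra R (K × H)) N
      (MonoidAlgebra R (H × G)) M).toLinearMap

lemma F4_tmul (p : K × H) (q : H × G) (c c' : R) (n : N) (m : M) :
    F4 X Y ρN ρM dcReps hreps
        ((MonoidAlgebra.single p c ⊗ₜ[R] n) ⊗ₜ[R] (MonoidAlgebra.single q c' ⊗ₜ[R] m))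
      = c • c' • coreT X Y ρN ρM dcReps hreps p.1 (p.2⁻¹ * q.1) q.2 (n ⊗ₜ[R] m) := by
  unfold F4
  rw [LinearMap.comp_apply, LinearEquiv.coe_coe, TensorProduct.tensorTensorTensorComm_tmul,
    TensorProduct.lift.tmul, TensorProduct.lift.tmul, Fcur_single]
  rfl

lemma hker1 : indRel R (K × H) Y N ρN ≤
    LinearMap.ker (TensorProduct.curry (F4 X Y ρN ρM dcReps hreps)) := by
  rw [indRel, Submodule.span_le]
  rintro z ⟨γ, y, n, rfl⟩
  obtain ⟨⟨κ₀, a₀⟩, hy⟩ := y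
  simp only [SetLike.mem_coe, LinearMap.mem_ker, map_sub]
  rw [sub_eq_zero]
  refine TensorProduct.ext (MonoidAlgebra.lhom_ext' fun q =>
    LinearMap.ext_ring (LinearMap.ext fun m => ?_))
  simp only [LinearMap.compr₂_apply, LinearMap.compr₂ₛₗ_apply, LinearMap.comp_apply,
    TensorProduct.mk_apply, MonoidAlgebra.lsingle_apply, TensorProduct.curry_apply]
  rw [F4_tmul, F4_tmul]
  simp only [one_smul]
  show coreT X Y ρN ρM dcReps hreps (γ.1 * κ₀) ((γ.2 * a₀)⁻¹ * q.1) q.2 (n ⊗ₜ[R] m)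
    = coreT X Y ρN ρM dcReps hreps γ.1 (γ.2⁻¹ * q.1) q.2
        ((ρN ⟨(κ₀, a₀), hy⟩ n) ⊗ₜ[R] m)
  have ew : (γ.2 * a₀)⁻¹ * q.1 = a₀⁻¹ * (γ.2⁻¹ * q.1) := by group
  rw [ew]
  exact coreT_moveY X Y ρN ρM dcReps hreps γ.1 (γ.2⁻¹ * q.1) q.2 κ₀ a₀ hy n m

noncomputable def FA : IndY →ₗ[R] ((MonoidAlgebra R (H × G) ⊗[R] M) →ₗ[R] BigR) :=
  Submodule.liftQ _ (TensorProduct.curry (F4 X Y ρN ρM dcReps hreps))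
    (hker1 X Y ρN ρM dcReps hreps)

lemma FA_gen (p : K × H) (c : R) (n : N) (w : MonoidAlgebra R (H × G) ⊗[R] M) :
    FA X Y ρN ρM dcReps hreps (Ind.gen R (K × H) Y N ρN p c n) w
      = F4 X Y ρN ρM dcReps hreps ((MonoidAlgebra.single p c ⊗ₜ[R] n) ⊗ₜ[R] w) :=
  rfl

lemma hker2 : indRel R (H × G) X M ρM ≤
    LinearMap.ker (FA X Y ρN ρM dcReps hreps).flip := by
  rw [indRel, Submodule.span_le]
  rintro z ⟨q, x, m, rfl⟩
  obtain ⟨⟨b₀, γ₀⟩, hx⟩ := x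
  simp only [SetLike.mem_coe, LinearMap.mem_ker]
  refine ind_hom_ext Y ρN (g := 0) fun p n => ?_
  simp only [LinearMap.flip_apply, LinearMap.zero_apply, map_sub, LinearMap.sub_apply]
  rw [FA_gen, FA_gen, F4_tmul, F4_tmul]
  simp only [one_smul]
  rw [sub_eq_zero]
  show coreT X Y ρN ρM dcReps hreps p.1 (p.2⁻¹ * (q.1 * b₀)) (q.2 * γ₀) (n ⊗ₜ[R] m)
    = coreT X Y ρN ρM dcReps hreps p.1 (p.2⁻¹ * q.1) q.2
        (n ⊗ₜ[R] (ρM ⟨(b₀, γ₀), hx⟩ m))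
  have ew : p.2⁻¹ * (q.1 * b₀) = (p.2⁻¹ * q.1) * b₀ := by group
  rw [ew]
  exact coreT_moveX X Y ρN ρM dcReps hreps p.1 (p.2⁻¹ * q.1) q.2 b₀ γ₀ hx n m

noncomputable def FB : IndX →ₗ[R] (IndY →ₗ[R] BigR) :=
  Submodule.liftQ _ (FA X Y ρN ρM dcReps hreps).flip (hker2 X Y ρN ρM dcReps hreps)

noncomputable def Fpre : (IndY ⊗[R] IndX) →ₗ[R] BigR :=
  TensorProduct.lift (FB X Y ρN ρM dcReps hreps).flip

lemma Fpre_gen (p : K × H) (q : H × G) (c c' : R) (n : N) (m : M) :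
    Fpre X Y ρN ρM dcReps hreps
        ((Ind.gen R (K × H) Y N ρN p c n) ⊗ₜ[R] (Ind.gen R (H × G) X M ρM q c' m))
      = c • c' • coreT X Y ρN ρM dcReps hreps p.1 (p.2⁻¹ * q.1) q.2 (n ⊗ₜ[R] m) := by
  show F4 X Y ρN ρM dcReps hreps
      ((MonoidAlgebra.single p c ⊗ₜ[R] n) ⊗ₜ[R] (MonoidAlgebra.single q c' ⊗ₜ[R] m)) = _
  rw [F4_tmul]

lemma hker3 : (bigRel : Submodule R (IndY ⊗[R] IndX)) ≤
    LinearMap.ker (Fpre X Y ρN ρM dcReps hreps) := by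
  rw [rhRel, Submodule.span_le]
  rintro z ⟨h, x, y, rfl⟩
  simp only [SetLike.mem_coe, LinearMap.mem_ker, map_sub]
  rw [sub_eq_zero]
  have main : (FB X Y ρN ρM dcReps hreps).flip ∘ₗ (rhoInd Y ρN ((1 : K), h⁻¹))
      = (LinearMap.lcomp R BigR (rhoInd X ρM (h, (1 : G)))) ∘ₗ
          (FB X Y ρN ρM dcReps hreps).flip := by
    refine ind_hom_ext Y ρN fun p n => ?_
    simp only [LinearMap.comp_apply]
    rw [rhoInd_gen]
    refine ind_hom_ext X ρM fun q m => ?_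
    simp only [LinearMap.lcomp_apply]
    rw [rhoInd_gen]
    show Fpre X Y ρN ρM dcReps hreps
        ((Ind.gen R (K × H) Y N ρN (((1:K), h⁻¹) * p) 1 n) ⊗ₜ[R]
          (Ind.gen R (H × G) X M ρM q 1 m))
      = Fpre X Y ρN ρM dcReps hreps
        ((Ind.gen R (K × H) Y N ρN p 1 n) ⊗ₜ[R]
          (Ind.gen R (H × G) X M ρM ((h, (1:G)) * q) 1 m))
    rw [Fpre_gen, Fpre_gen]
    have e1 : (((1:K), h⁻¹) * p).1 = p.1 := by simp
    have e2 : ((h, (1:G)) * q).2 = q.2 := by simp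
    have e3 : ((((1:K), h⁻¹) * p).2)⁻¹ * q.1 = p.2⁻¹ * ((h, (1:G)) * q).1 := by
      show (h⁻¹ * p.2)⁻¹ * q.1 = p.2⁻¹ * (h * q.1)
      group
    rw [e1, e2, e3]
  have := LinearMap.congr_fun (LinearMap.congr_fun main x) y
  exact this

/-- The forward Mackey map. -/
noncomputable def Fmap : BigL →ₗ[R] BigR :=
  Submodule.liftQ _ (Fpre X Y ρN ρM dcReps hreps) (hker3 X Y ρN ρM dcReps hreps)

lemma Fmap_gen (p : K × H) (q : H × G) (c c' : R) (n : N) (m : M) :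
    Fmap X Y ρN ρM dcReps hreps (Submodule.Quotient.mk
        ((Ind.gen R (K × H) Y N ρN p c n) ⊗ₜ[R] (Ind.gen R (H × G) X M ρM q c' m)))
      = c • c' • coreT X Y ρN ρM dcReps hreps p.1 (p.2⁻¹ * q.1) q.2 (n ⊗ₜ[R] m) := by
  rw [Fmap, Submodule.liftQ_apply, Fpre_gen]

end Main5
end MackeyProof
namespace MackeyProof
section Main6
variable {R K H G N M : Type u} [CommRing R] [Group K] [Group H] [Group G]
  [AddCommGroup N] [Module R N] [AddCommGroup M] [Module R M]
variable (X : Subgroup (H × G)) (Y : Subgroup (K × H))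
  (ρN : Y →* Module.End R N) (ρM : X →* Module.End R M)

local notation "IndY" => Ind R (K × H) Y N ρN
local notation "IndX" => Ind R (H × G) X M ρM
local notation "bigRel" => rhRel IndY IndX (rhoInd Y ρN) (rhoInd X ρM)
local notation "BigL" => (IndY ⊗[R] IndX) ⧸ bigRel

/-- ext principle for maps out of `SmallTensor`. -/
lemma small_hom_ext (t : H) {V : Type*} [AddCommGroup V] [Module R V]
    {f g : SmallTensor X Y ρN ρM t →ₗ[R] V}
    (h : ∀ (n : N) (m : M),
      f (Submodule.Quotient.mk (n ⊗ₜ[R] m)) = g (Submodule.Quotient.mk (n ⊗ₜ[R] m))) :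
    f = g := by
  refine Submodule.linearMap_qext _ (TensorProduct.ext' fun n m => ?_)
  exact h n m

noncomputable def bcoreT (t : H) (k' : K) (g' : G) : (N ⊗[R] M) →ₗ[R] BigL :=
  (bigRel).mkQ ∘ₗ TensorProduct.map (genLin Y ρN (k', (1 : H))) (genLin X ρM (t, g'))

lemma bcoreT_apply (t : H) (k' : K) (g' : G) (n : N) (m : M) :
    bcoreT X Y ρN ρM t k' g' (n ⊗ₜ[R] m) = Submodule.Quotient.mk
      ((Ind.gen R (K × H) Y N ρN (k', (1 : H)) 1 n) ⊗ₜ[R]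
        (Ind.gen R (H × G) X M ρM (t, g') 1 m)) :=
  rfl

lemma hsmallker (t : H) (k' : K) (g' : G) :
    smallRel X Y ρN ρM t ≤ LinearMap.ker (bcoreT X Y ρN ρM t k' g') := by
  rw [smallRel, Submodule.span_le]
  rintro z ⟨d, h1, h2, n, m, rfl⟩
  simp only [SetLike.mem_coe, LinearMap.mem_ker, map_sub]
  rw [sub_eq_zero, bcoreT_apply, bcoreT_apply]
  rw [gen_rel Y ρN (k', (1:H)) 1 ⟨((1:K), d⁻¹), by simpa using Y.inv_mem h1⟩ n,
    gen_rel X ρM (t, g') 1 ⟨(t⁻¹ * d * t, (1:G)), h2⟩ m]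
  have e1 : ((k', (1:H)) : K × H) * (((1:K), d⁻¹) : K × H) = (k', d⁻¹) := by
    ext
    · show k' * 1 = k'
      simp
    · show 1 * d⁻¹ = d⁻¹
      simp
  have e2 : ((t, g') : H × G) * ((t⁻¹ * d * t, (1:G)) : H × G) = (d * t, g') := by
    ext
    · show t * (t⁻¹ * d * t) = d * t
      group
    · show g' * 1 = g'
      simp
  rw [e1, e2]
  have r1 : Ind.gen R (K × H) Y N ρN (k', d⁻¹) 1 n
      = rhoInd Y ρN ((1:K), d⁻¹) (Ind.gen R (K × H) Y N ρN (k', (1:H)) 1 n) := by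
    rw [rhoInd_gen]
    congr 1
    ext
    · show k' = 1 * k'
      simp
    · show d⁻¹ = d⁻¹ * 1
      simp
  have r2 : Ind.gen R (H × G) X M ρM (d * t, g') 1 m
      = rhoInd X ρM (d, (1:G)) (Ind.gen R (H × G) X M ρM (t, g') 1 m) := by
    rw [rhoInd_gen]
    congr 1
    ext
    · rfl
    · show g' = 1 * g'
      simp
  rw [r1, r2]
  have := rhRel_mk_eq X Y ρN ρM d (Ind.gen R (K × H) Y N ρN (k', (1:H)) 1 n)
    (Ind.gen R (H × G) X M ρM (t, g') 1 m)
  simpa using this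

noncomputable def bSmall (t : H) (k' : K) (g' : G) :
    SmallTensor X Y ρN ρM t →ₗ[R] BigL :=
  Submodule.liftQ _ (bcoreT X Y ρN ρM t k' g') (hsmallker X Y ρN ρM t k' g')

lemma bSmall_mk (t : H) (k' : K) (g' : G) (n : N) (m : M) :
    bSmall X Y ρN ρM t k' g' (Submodule.Quotient.mk (n ⊗ₜ[R] m)) = Submodule.Quotient.mk
      ((Ind.gen R (K × H) Y N ρN (k', (1 : H)) 1 n) ⊗ₜ[R]
        (Ind.gen R (H × G) X M ρM (t, g') 1 m)) :=
  rfl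

noncomputable def bpre (t : H) :
    (MonoidAlgebra R (K × G) ⊗[R] SmallTensor X Y ρN ρM t) →ₗ[R] BigL :=
  TensorProduct.lift ((Finsupp.lsum R fun p =>
    LinearMap.toSpanSingleton R _ (bSmall X Y ρN ρM t p.1 p.2)) ∘ₗ
      (MonoidAlgebra.coeffLinearEquiv R).toLinearMap)

lemma bpre_single (t : H) (p : K × G) (c : R) (s : SmallTensor X Y ρN ρM t) :
    bpre X Y ρN ρM t (MonoidAlgebra.single p c ⊗ₜ[R] s)
      = c • bSmall X Y ρN ρM t p.1 p.2 s := by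
  unfold bpre
  rw [TensorProduct.lift.tmul]
  simp only [LinearMap.comp_apply, LinearEquiv.coe_coe, MonoidAlgebra.coeffLinearEquiv_apply,
    MonoidAlgebra.coeff_single, Finsupp.lsum_single, LinearMap.toSpanSingleton_apply,
    LinearMap.smul_apply]

lemma hindSker (t : H) :
    indRel R (K × G) (starSubgroup X Y t) (SmallTensor X Y ρN ρM t) (rhoS X Y ρN ρM t)
      ≤ LinearMap.ker (bpre X Y ρN ρM t) := by
  rw [indRel, Submodule.span_le]
  rintro z ⟨γ, zz, s, rfl⟩
  simp only [SetLike.mem_coe, LinearMap.mem_ker, map_sub]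
  rw [sub_eq_zero, bpre_single, bpre_single, one_smul, one_smul]
  have main : bSmall X Y ρN ρM t (γ * (zz : K × G)).1 (γ * (zz : K × G)).2
      = (bSmall X Y ρN ρM t γ.1 γ.2) ∘ₗ (rhoS X Y ρN ρM t zz) := by
    refine small_hom_ext X Y ρN ρM t fun n m => ?_
    set h₀ : H := zz.2.choose with hh₀
    have hY₀ : ((zz : K × G).1, h₀) ∈ Y := zz.2.choose_spec.1
    have hX₀ : (t⁻¹ * h₀ * t, (zz : K × G).2) ∈ X := zz.2.choose_spec.2
    have hz : rhoS X Y ρN ρM t zz (Submodule.Quotient.mk (n ⊗ₜ[R] m))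
        = Submodule.Quotient.mk ((ρN ⟨((zz : K × G).1, h₀), hY₀⟩ n) ⊗ₜ[R]
            (ρM ⟨(t⁻¹ * h₀ * t, (zz : K × G).2), hX₀⟩ m)) := rfl
    erw [LinearMap.comp_apply, hz, bSmall_mk, bSmall_mk]
    rw [gen_rel Y ρN (γ.1, (1:H)) 1 ⟨((zz : K × G).1, h₀), hY₀⟩ n,
      gen_rel X ρM (t, γ.2) 1 ⟨(t⁻¹ * h₀ * t, (zz : K × G).2), hX₀⟩ m]
    have e1 : ((γ.1, (1:H)) : K × H) * ((zz : K × G).1, h₀) = (γ.1 * (zz : K × G).1, h₀) := by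
      ext
      · rfl
      · show 1 * h₀ = h₀
        simp
    have e2 : ((t, γ.2) : H × G) * ((t⁻¹ * h₀ * t, (zz : K × G).2) : H × G)
        = (h₀ * t, γ.2 * (zz : K × G).2) := by
      ext
      · show t * (t⁻¹ * h₀ * t) = h₀ * t
        group
      · rfl
    rw [e1, e2]
    have r1 : Ind.gen R (K × H) Y N ρN (γ.1 * (zz : K × G).1, h₀) 1 n
        = rhoInd Y ρN ((1:K), h₀) (Ind.gen R (K × H) Y N ρN
            (γ.1 * (zz : K × G).1, (1:H)) 1 n) := by
      rw [rhoInd_gen]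
      congr 1
      ext
      · show γ.1 * (zz : K × G).1 = 1 * (γ.1 * (zz : K × G).1)
        simp
      · show h₀ = h₀ * 1
        simp
    have r2 : Ind.gen R (H × G) X M ρM (h₀ * t, γ.2 * (zz : K × G).2) 1 m
        = rhoInd X ρM (h₀, (1:G)) (Ind.gen R (H × G) X M ρM
            (t, γ.2 * (zz : K × G).2) 1 m) := by
      rw [rhoInd_gen]
      congr 1
      ext
      · rfl
      · show γ.2 * (zz : K × G).2 = 1 * (γ.2 * (zz : K × G).2)
        simp
    rw [r1, r2]
    have rel := rhRel_mk_eq X Y ρN ρM h₀⁻¹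
      (Ind.gen R (K × H) Y N ρN (γ.1 * (zz : K × G).1, (1:H)) 1 n)
      (rhoInd X ρM (h₀, (1:G)) (Ind.gen R (H × G) X M ρM (t, γ.2 * (zz : K × G).2) 1 m))
    rw [inv_inv] at rel
    rw [rel]
    have collapse : rhoInd X ρM (h₀⁻¹, (1:G)) (rhoInd X ρM (h₀, (1:G))
        (Ind.gen R (H × G) X M ρM (t, γ.2 * (zz : K × G).2) 1 m))
        = Ind.gen R (H × G) X M ρM (t, γ.2 * (zz : K × G).2) 1 m := by
      rw [← Module.End.mul_apply, ← map_mul]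
      have : ((h₀⁻¹, (1:G)) : H × G) * (h₀, (1:G)) = 1 := by
        ext
        · show h₀⁻¹ * h₀ = 1
          simp
        · show (1 : G) * 1 = 1
          simp
      rw [this, map_one, Module.End.one_apply]
    rw [collapse]
    rfl
  rw [main]
  rfl

end Main6
end MackeyProof
namespace MackeyProof
section Main7
variable {R K H G N M : Type u} [CommRing R] [Group K] [Group H] [Group G]
  [AddCommGroup N] [Module R N] [AddCommGroup M] [Module R M]
variable (X : Subgroup (H × G)) (Y : Subgroup (K × H))
  (ρN : Y →* Module.End R N) (ρM : X →* Module.End R M)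
variable (dcReps : Set H)
  (hreps : ∀ h : H, ∃! t : H, t ∈ dcReps ∧
    ∃ a ∈ Y.map (MonoidHom.snd K H), ∃ b ∈ X.map (MonoidHom.fst H G), h = a * t * b)

local notation "IndY" => Ind R (K × H) Y N ρN
local notation "IndX" => Ind R (H × G) X M ρM
local notation "bigRel" => rhRel IndY IndX (rhoInd Y ρN) (rhoInd X ρM)
local notation "BigL" => (IndY ⊗[R] IndX) ⧸ bigRel
local notation "BigR" => ⨁ t : dcReps, Ind R (K × G) (starSubgroup X Y (t : H))
  (SmallTensor X Y ρN ρM (t : H)) (rhoS X Y ρN ρM (t : H))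

noncomputable def Bmap : BigR →ₗ[R] BigL :=
  DirectSum.toModule R dcReps _ (fun t =>
    Submodule.liftQ _ (bpre X Y ρN ρM (t : H)) (hindSker X Y ρN ρM (t : H)))

lemma Bmap_lof_gen (t : dcReps) (p : K × G) (c : R) (s : SmallTensor X Y ρN ρM (t : H)) :
    Bmap X Y ρN ρM dcReps (DirectSum.lof R dcReps _ t
        (Ind.gen R (K × G) (starSubgroup X Y (t : H)) _ (rhoS X Y ρN ρM (t : H)) p c s))
      = c • bSmall X Y ρN ρM (t : H) p.1 p.2 s := by
  unfold Bmap
  erw [DirectSum.toModule_lof]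
  show bpre X Y ρN ρM (t : H) (MonoidAlgebra.single p c ⊗ₜ[R] s) = _
  rw [bpre_single]

/-- ext principle for maps out of `BigL`. -/
lemma bigL_hom_ext {V : Type*} [AddCommGroup V] [Module R V] {f g : BigL →ₗ[R] V}
    (hfg : ∀ (p : K × H) (q : H × G) (n : N) (m : M),
      f (Submodule.Quotient.mk
          ((Ind.gen R (K × H) Y N ρN p 1 n) ⊗ₜ[R] (Ind.gen R (H × G) X M ρM q 1 m)))
        = g (Submodule.Quotient.mk
          ((Ind.gen R (K × H) Y N ρN p 1 n) ⊗ₜ[R] (Ind.gen R (H × G) X M ρM q 1 m)))) :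
    f = g := by
  refine Submodule.linearMap_qext _ (TensorProduct.ext ?_)
  refine ind_hom_ext Y ρN fun p n => ?_
  refine ind_hom_ext X ρM fun q m => ?_
  simpa using hfg p q n m

/-- ext principle for maps out of `BigR`. -/
lemma bigR_hom_ext {V : Type*} [AddCommGroup V] [Module R V] {f g : BigR →ₗ[R] V}
    (hfg : ∀ (t : dcReps) (p : K × G) (n : N) (m : M),
      f (DirectSum.lof R dcReps _ t (Ind.gen R (K × G) (starSubgroup X Y (t : H)) _
          (rhoS X Y ρN ρM (t : H)) p 1 (Submodule.Quotient.mk (n ⊗ₜ[R] m))))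
        = g (DirectSum.lof R dcReps _ t (Ind.gen R (K × G) (starSubgroup X Y (t : H)) _
          (rhoS X Y ρN ρM (t : H)) p 1 (Submodule.Quotient.mk (n ⊗ₜ[R] m))))) :
    f = g := by
  refine DirectSum.linearMap_ext _ fun t => ?_
  refine ind_hom_ext (starSubgroup X Y (t : H)) (rhoS X Y ρN ρM (t : H)) fun p s => ?_
  have key : (f ∘ₗ DirectSum.lof R dcReps _ t) ∘ₗ
        (genLin (starSubgroup X Y (t : H)) (rhoS X Y ρN ρM (t : H)) p)
      = (g ∘ₗ DirectSum.lof R dcReps _ t) ∘ₗ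
        (genLin (starSubgroup X Y (t : H)) (rhoS X Y ρN ρM (t : H)) p) := by
    refine small_hom_ext X Y ρN ρM (t : H) fun n m => ?_
    exact hfg t p n m
  exact LinearMap.congr_fun key s

lemma BF_id : (Bmap X Y ρN ρM dcReps) ∘ₗ (Fmap X Y ρN ρM dcReps hreps)
    = LinearMap.id := by
  refine bigL_hom_ext X Y ρN ρM fun p q n m => ?_
  rw [LinearMap.comp_apply, Fmap_gen, one_smul, one_smul, LinearMap.id_apply]
  rw [coreT, coreWith_apply]
  erw [Bmap_lof_gen, one_smul, bSmall_mk]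
  set w : H := p.2⁻¹ * q.1 with hw
  set d := dcP X Y dcReps hreps w with hd
  set t := dcT X Y dcReps hreps w with ht
  have hmemY := dcP_memY X Y dcReps hreps w
  have hmemX := dcP_memX X Y dcReps hreps w
  have hweq := dcP_eq X Y dcReps hreps w
  -- left side: reduce the generators
  rw [gen_rel Y ρN (p.1 * d.1.1, (1:H)) 1 ((⟨d.1, hmemY⟩ : Y)⁻¹) n]
  rw [gen_rel X ρM (t, q.2 * d.2.2⁻¹) 1 (⟨d.2, hmemX⟩ : X) m]
  have e1 : ((p.1 * d.1.1, (1:H)) : K × H) * (((⟨d.1, hmemY⟩ : Y)⁻¹ : Y) : K × H)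
      = (p.1, d.1.2⁻¹) := by
    ext
    · show (p.1 * d.1.1) * d.1.1⁻¹ = p.1
      group
    · show 1 * d.1.2⁻¹ = d.1.2⁻¹
      simp
  have e2 : ((t, q.2 * d.2.2⁻¹) : H × G) * (d.2 : H × G) = (t * d.2.1, q.2) := by
    ext
    · rfl
    · show (q.2 * d.2.2⁻¹) * d.2.2 = q.2
      group
  rw [e1, e2]
  have r1 : Ind.gen R (K × H) Y N ρN (p.1, d.1.2⁻¹) 1 n
      = rhoInd Y ρN ((1:K), d.1.2⁻¹) (Ind.gen R (K × H) Y N ρN (p.1, (1:H)) 1 n) := by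
    rw [rhoInd_gen]
    congr 1
    ext
    · show p.1 = 1 * p.1
      simp
    · show d.1.2⁻¹ = d.1.2⁻¹ * 1
      simp
  rw [r1]
  have rel1 := rhRel_mk_eq X Y ρN ρM d.1.2
    (Ind.gen R (K × H) Y N ρN (p.1, (1:H)) 1 n)
    (Ind.gen R (H × G) X M ρM (t * d.2.1, q.2) 1 m)
  rw [rel1]
  have r2 : rhoInd X ρM (d.1.2, (1:G)) (Ind.gen R (H × G) X M ρM (t * d.2.1, q.2) 1 m)
      = Ind.gen R (H × G) X M ρM (w, q.2) 1 m := by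
    rw [rhoInd_gen]
    congr 1
    ext
    · show d.1.2 * (t * d.2.1) = w
      rw [hweq]
      group
      rfl
    · show 1 * q.2 = q.2
      simp
  rw [r2]
  -- right side: reduce the target
  have r3 : Ind.gen R (K × H) Y N ρN p 1 n
      = rhoInd Y ρN ((1:K), p.2) (Ind.gen R (K × H) Y N ρN (p.1, (1:H)) 1 n) := by
    rw [rhoInd_gen]
    congr 1
    ext
    · show p.1 = 1 * p.1
      simp
    · show p.2 = p.2 * 1
      simp
  rw [r3]
  have rel2 := rhRel_mk_eq X Y ρN ρM p.2⁻¹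
    (Ind.gen R (K × H) Y N ρN (p.1, (1:H)) 1 n)
    (Ind.gen R (H × G) X M ρM q 1 m)
  rw [inv_inv] at rel2
  rw [rel2]
  have r4 : rhoInd X ρM (p.2⁻¹, (1:G)) (Ind.gen R (H × G) X M ρM q 1 m)
      = Ind.gen R (H × G) X M ρM (w, q.2) 1 m := by
    rw [rhoInd_gen]
    congr 1
    ext
    · rfl
    · show 1 * q.2 = q.2
      simp
  rw [r4]

lemma FB_id : (Fmap X Y ρN ρM dcReps hreps) ∘ₗ (Bmap X Y ρN ρM dcReps)
    = LinearMap.id := by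
  refine bigR_hom_ext X Y ρN ρM dcReps fun t p n m => ?_
  rw [LinearMap.comp_apply]
  erw [Bmap_lof_gen]
  rw [one_smul, bSmall_mk, Fmap_gen, one_smul, one_smul,
    LinearMap.id_apply]
  have ew : ((p.1, (1:H)) : K × H).2⁻¹ * ((↑t : H), p.2).1 = (t : H) := by
    show (1:H)⁻¹ * (t : H) = (t : H)
    simp
  rw [ew]
  have hY1 : ((1:K), (1:H)) ∈ Y := by exact Y.one_mem
  have hX1 : ((1:H), (1:G)) ∈ X := by exact X.one_mem
  have e1 : coreT X Y ρN ρM dcReps hreps ((p.1, (1:H)) : K × H).1 (t : H)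
        (((↑t : H), p.2) : H × G).2
      = coreWith X Y ρN ρM dcReps p.1 p.2 t ((1:K), (1:H)) ((1:H), (1:G)) hY1 hX1 := by
    have := coreT_eq X Y ρN ρM dcReps hreps p.1 (t : H) p.2 (t : H) t.2
      ((1:K), (1:H)) ((1:H), (1:G)) hY1 hX1 (by simp)
    simpa using this
  rw [e1, coreWith_apply]
  have eY1 : ((⟨((1:K), (1:H)), hY1⟩ : Y))⁻¹ = 1 := by
    rw [inv_eq_one]
    ext
    · rfl
    · rfl
  have eX1 : (⟨((1:H), (1:G)), hX1⟩ : X) = 1 := by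
    ext
    · rfl
    · rfl
  rw [eY1, eX1, map_one, map_one, Module.End.one_apply, Module.End.one_apply]
  have ep : ((p.1 * (1:K), p.2 * (1:G)⁻¹) : K × G) = p := by
    ext
    · show p.1 * 1 = p.1
      simp
    · show p.2 * 1⁻¹ = p.2
      simp
  rw [ep]

lemma F_equivariant (pz : K × G) :
    (Fmap X Y ρN ρM dcReps hreps) ∘ₗ (rhoT X Y ρN ρM pz : Module.End R BigL)
      = (rhoD X Y ρN ρM dcReps pz : Module.End R BigR) ∘ₗ
        (Fmap X Y ρN ρM dcReps hreps) := by
  refine bigL_hom_ext X Y ρN ρM fun p q n m => ?_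
  rw [LinearMap.comp_apply, LinearMap.comp_apply]
  have hT : rhoT X Y ρN ρM pz (Submodule.Quotient.mk
      ((Ind.gen R (K × H) Y N ρN p 1 n) ⊗ₜ[R] (Ind.gen R (H × G) X M ρM q 1 m)))
      = Submodule.Quotient.mk
        ((Ind.gen R (K × H) Y N ρN ((pz.1, (1:H)) * p) 1 n) ⊗ₜ[R]
          (Ind.gen R (H × G) X M ρM (((1:H), pz.2) * q) 1 m)) := by
    rw [show pz = (pz.1, pz.2) from rfl, rhoT_mk, rhoInd_gen, rhoInd_gen]
  rw [hT, Fmap_gen, Fmap_gen, one_smul, one_smul]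
  have e1 : ((pz.1, (1:H)) * p).1 = pz.1 * p.1 := rfl
  have e2 : (((1:H), pz.2) * q).2 = pz.2 * q.2 := rfl
  have e3 : (((pz.1, (1:H)) * p).2)⁻¹ * (((1:H), pz.2) * q).1 = p.2⁻¹ * q.1 := by
    show ((1:H) * p.2)⁻¹ * ((1:H) * q.1) = p.2⁻¹ * q.1
    simp
  rw [e1, e2, e3]
  rw [coreT_equivariant X Y ρN ρM dcReps hreps pz.1 p.1 (p.2⁻¹ * q.1) pz.2 q.2 (n ⊗ₜ[R] m)]
  simp only [one_smul]

end Main7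
end MackeyProof

/-- The main theorem (Bouc, "Bisets as categories"): for an `RX`-module `M` and an
`RY`-module `N` (with `X ≤ H × G`, `Y ≤ K × H`), there is an isomorphism of
`(RK,RG)`-bimodules (i.e. `R(K×G)`-modules)
`(Ind_Y^{K×H} N) ⊗_{RH} (Ind_X^{H×G} M) ≅
   ⨁_{t ∈ [p₂(Y)\H/p₁(X)]} Ind_{Y*⁽ᵗ'¹⁾X}^{K×G} (N ⊗_{R(k₂(Y) ∩ ᵗk₁(X))} ⁽ᵗ'¹⁾M)`,
where `(k,g) ∈ Y*⁽ᵗ'¹⁾X` acts on `N ⊗ M` by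
`k·(n ⊗ m)·g⁻¹ = (k·n·h⁻¹) ⊗ (hᵗ·m·g⁻¹)` whenever `(k,h) ∈ Y` and `(hᵗ,g) ∈ X`. -/
theorem induced_bimodule_tensor_mackey [Finite K] [Finite H] [Finite G]
    (X : Subgroup (H × G)) (Y : Subgroup (K × H))
    (ρN : Y →* Module.End R N) (ρM : X →* Module.End R M)
    (dcReps : Set H)
    (hreps : ∀ h : H, ∃! t : H, t ∈ dcReps ∧
      ∃ a ∈ Y.map (MonoidHom.snd K H), ∃ b ∈ X.map (MonoidHom.fst H G), h = a * t * b) :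
    -- `Ind_Y^{K×H} N` with its `R(K×H)`-module structure:
    ∃ ρIN : (K × H) →* Module.End R (Ind R (K × H) Y N ρN),
      (∀ (p p' : K × H) (c : R) (n : N),
        ρIN p (Ind.gen R (K × H) Y N ρN p' c n) = Ind.gen R (K × H) Y N ρN (p * p') c n) ∧
    -- `Ind_X^{H×G} M` with its `R(H×G)`-module structure:
    ∃ ρIM : (H × G) →* Module.End R (Ind R (H × G) X M ρM),
      (∀ (p p' : H × G) (c : R) (m : M),
        ρIM p (Ind.gen R (H × G) X M ρM p' c m) = Ind.gen R (H × G) X M ρM (p * p') c m) ∧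
    -- the tensor product over `RH` with its `R(K×G)`-module structure:
    ∃ ρT : (K × G) →* Module.End R
        ((Ind R (K × H) Y N ρN ⊗[R] Ind R (H × G) X M ρM) ⧸ rhRel _ _ ρIN ρIM),
      (∀ (k : K) (g : G) (x : Ind R (K × H) Y N ρN) (y : Ind R (H × G) X M ρM),
        ρT (k, g) (Submodule.Quotient.mk (x ⊗ₜ[R] y)) =
          Submodule.Quotient.mk ((ρIN (k, (1 : H)) x) ⊗ₜ[R] (ρIM ((1 : H), g) y))) ∧
    -- the action of `Y*⁽ᵗ'¹⁾X` on each `N ⊗_{R(k₂(Y) ∩ ᵗk₁(X))} ⁽ᵗ'¹⁾M`: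
    ∃ ρS : ∀ t : dcReps, (starSubgroup X Y (t : H)) →*
        Module.End R (SmallTensor X Y ρN ρM (t : H)),
      (∀ (t : dcReps) (k : K) (g : G) (h : H) (hkh : (k, h) ∈ Y)
          (hhg : ((t : H)⁻¹ * h * (t : H), g) ∈ X) (n : N) (m : M),
        ρS t ⟨(k, g), ⟨h, hkh, hhg⟩⟩
            (Submodule.Quotient.mk (n ⊗ₜ[R] m) : SmallTensor X Y ρN ρM (t : H)) =
          (Submodule.Quotient.mk ((ρN ⟨(k, h), hkh⟩ n) ⊗ₜ[R]
              (ρM ⟨((t : H)⁻¹ * h * (t : H), g), hhg⟩ m)) :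
            SmallTensor X Y ρN ρM (t : H))) ∧
    -- the induced modules `Ind_{Y*⁽ᵗ'¹⁾X}^{K×G}(N ⊗ M)` with their actions:
    ∃ ρIS : ∀ t : dcReps, (K × G) →* Module.End R
        (Ind R (K × G) (starSubgroup X Y (t : H)) (SmallTensor X Y ρN ρM (t : H)) (ρS t)),
      (∀ (t : dcReps) (p p' : K × G) (c : R) (s : SmallTensor X Y ρN ρM (t : H)),
        ρIS t p (Ind.gen R (K × G) (starSubgroup X Y (t : H)) _ (ρS t) p' c s) =
          Ind.gen R (K × G) (starSubgroup X Y (t : H)) _ (ρS t) (p * p') c s) ∧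
    -- the direct sum over double coset representatives, with componentwise action:
    ∃ ρD : (K × G) →* Module.End R
        (⨁ t : dcReps, Ind R (K × G) (starSubgroup X Y (t : H))
          (SmallTensor X Y ρN ρM (t : H)) (ρS t)),
      (∀ (p : K × G) (t : dcReps) x,
        ρD p (DirectSum.lof R dcReps _ t x) = DirectSum.lof R dcReps _ t (ρIS t p x)) ∧
    -- the Mackey isomorphism, as an equivariant `R`-linear isomorphism:
    ∃ e : ((Ind R (K × H) Y N ρN ⊗[R] Ind R (H × G) X M ρM) ⧸ rhRel _ _ ρIN ρIM) ≃ₗ[R]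
        (⨁ t : dcReps, Ind R (K × G) (starSubgroup X Y (t : H))
          (SmallTensor X Y ρN ρM (t : H)) (ρS t)),
      ∀ (p : K × G) x, e (ρT p x) = ρD p (e x) := by
  classical
  refine ⟨MackeyProof.rhoInd Y ρN, fun p p' c n => MackeyProof.rhoInd_gen Y ρN p p' c n,
    MackeyProof.rhoInd X ρM, fun p p' c m => MackeyProof.rhoInd_gen X ρM p p' c m,
    MackeyProof.rhoT X Y ρN ρM, fun k g x y => rfl,
    fun t => MackeyProof.rhoS X Y ρN ρM (t : H),
    fun t k g h hkh hhg n m => MackeyProof.rhoS_spec X Y ρN ρM (t : H) k g h hkh hhg n m,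
    fun t => MackeyProof.rhoInd (starSubgroup X Y (t : H)) (MackeyProof.rhoS X Y ρN ρM (t : H)),
    fun t p p' c s => MackeyProof.rhoInd_gen _ _ p p' c s,
    MackeyProof.rhoD X Y ρN ρM dcReps,
    fun p t x => MackeyProof.rhoD_lof X Y ρN ρM dcReps p t x,
    LinearEquiv.ofLinear (MackeyProof.Fmap X Y ρN ρM dcReps hreps)
      (MackeyProof.Bmap X Y ρN ρM dcReps) (MackeyProof.FB_id X Y ρN ρM dcReps hreps)
      (MackeyProof.BF_id X Y ρN ρM dcReps hreps),
    fun p x => ?_⟩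
  show MackeyProof.Fmap X Y ρN ρM dcReps hreps (MackeyProof.rhoT X Y ρN ρM p x)
    = MackeyProof.rhoD X Y ρN ρM dcReps p (MackeyProof.Fmap X Y ρN ρM dcReps hreps x)
  exact LinearMap.congr_fun (MackeyProof.F_equivariant X Y ρN ρM dcReps hreps p) x
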